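/- arXiv:1410.6097 — 6 statements merged into one kernel-verified Lean document; each statement's English description precedes it below -/
import Mathlib

section
/- Let A = (Q, A, ·, ∘) be a reversible invertible Mealy automaton with 𝒢(A) infinite. Then at most one of the two groups 𝒢(A) and 𝒢(∂A) (the group generated by the dual automaton) can have all stabilizers of boundary points trivial. -/
/-- A Mealy automaton (transducer) with state set `Q` and alphabet `A`. -/
structure Mealy (Q A : Type*) where
  step : Q → A → Q
  out : Q → A → A

namespace Mealy

variable {Q A : Type*}

/-- Action of a state on finite words over the alphabet. -/
def act (M : Mealy Q A) : Q → List A → List A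
  | _, [] => []
  | q, a :: w => M.out q a :: act M (M.step q a) w

/-- Action of the formal inverse of a state on finite words. -/
noncomputable def actInv (M : Mealy Q A) [Nonempty A] : Q → List A → List A
  | _, [] => []
  | q, a :: w =>
    Function.invFun (M.out q) a ::
      actInv M (M.step q (Function.invFun (M.out q) a)) w

/-- Action of a word over `Q ∪ Q⁻¹` (letters `(q, true)` are positive, `(q, false)`
are formal inverses) on finite words over the alphabet. -/
noncomputable def evalW (M : Mealy Q A) [Nonempty A] : List (Q × Bool) → List A → List A
  | [], v => v
  | (q, true) :: w, v => act M q (evalW M w v)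
  | (q, false) :: w, v => actInv M q (evalW M w v)

/-- Invertibility: every output function is a permutation of the alphabet. -/
def IsInvertible (M : Mealy Q A) : Prop := ∀ q, Function.Bijective (M.out q)

/-- Reversibility: every letter acts as a permutation of the states. -/
def IsReversible (M : Mealy Q A) : Prop := ∀ a, Function.Bijective fun q => M.step q a

/-- Bireversibility: invertible, reversible, and the output automaton is reversible. -/
def IsBireversible (M : Mealy Q A) [Nonempty A] : Prop :=
  M.IsInvertible ∧ M.IsReversible ∧
    ∀ b, Function.Bijective fun q => M.step q (Function.invFun (M.out q) b)

/-- The dual automaton: states and letters are exchanged. -/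
def dual (M : Mealy Q A) : Mealy A Q where
  step a q := M.out q a
  out a q := M.step q a

/-- The enriched dual `(∂A)⁻ = ∂(A ⊔ A⁻¹)`: states are letters of `A`,
the alphabet is `Q ∪ Q⁻¹`. -/
noncomputable def edual (M : Mealy Q A) [Nonempty A] : Mealy A (Q × Bool) where
  step a qs :=
    match qs with
    | (q, true) => M.out q a
    | (q, false) => Function.invFun (M.out q) a
  out a qs :=
    match qs with
    | (q, true) => (M.step q a, true)
    | (q, false) => (M.step q (Function.invFun (M.out q) a), false)

/-- The disjoint union `A ⊔ A⁻¹` of an invertible automaton with its inverse: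
states are `Q ∪ Q⁻¹`. -/
noncomputable def withInv (M : Mealy Q A) [Nonempty A] : Mealy (Q × Bool) A where
  step qs a :=
    match qs with
    | (q, true) => (M.step q a, true)
    | (q, false) => (M.step q (Function.invFun (M.out q) a), false)
  out qs a :=
    match qs with
    | (q, true) => M.out q a
    | (q, false) => Function.invFun (M.out q) a

/-- The enrichment `A⁻` of a reversible transducer, over the doubled alphabet
`A ∪ A⁻¹`: to every transition `q →^{a|b} p` the inverse transition
`p →^{a⁻¹|b⁻¹} q` is added. -/
noncomputable def enrich (M : Mealy Q A) [Nonempty Q] : Mealy Q (A × Bool) where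
  step q as :=
    match as with
    | (a, true) => M.step q a
    | (a, false) => Function.invFun (fun p => M.step p a) q
  out q as :=
    match as with
    | (a, true) => (M.out q a, true)
    | (a, false) => (M.out (Function.invFun (fun p => M.step p a) q) a, false)

/-- The state reached from `q` after reading the word `w`. -/
def run (M : Mealy Q A) (q : Q) (w : List A) : Q := w.foldl M.step q

/-- Action of a state on right-infinite words over the alphabet. -/
def actOmega (M : Mealy Q A) (q : Q) (u : ℕ → A) : ℕ → A :=
  fun n => M.out (M.run q (List.ofFn fun i : Fin n => u i)) (u n)

/-- Action of a word of states on right-infinite words. -/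
def applyListOmega (M : Mealy Q A) (l : List Q) (u : ℕ → A) : ℕ → A :=
  l.foldl (fun v q => M.actOmega q v) u

/-- The orbit of a boundary point under the semigroup generated by the states. -/
def orbitOmega (M : Mealy Q A) (u : ℕ → A) : Set (ℕ → A) :=
  {z | ∃ l : List Q, z = M.applyListOmega l u}

/-- Action of a word of states on finite words over the alphabet. -/
def wact (M : Mealy Q A) : List Q → List A → List A
  | [], u => u
  | q :: w, u => act M q (wact M w u)

/-- State-word transition: the coupled action `w · u` of an input word `u` on a
word of states `w`. -/
def wstep (M : Mealy Q A) : List Q → List A → List Q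
  | [], _ => []
  | q :: w, u => M.run q (wact M w u) :: wstep M w u

end Mealy

/-- The length-`n` prefix of a right-infinite word. -/
def pre {α : Type*} (u : ℕ → α) (n : ℕ) : List α := List.ofFn fun i : Fin n => u i

/-- The periodic infinite word `w^ω`. -/
def periodicWord {α : Type*} [Inhabited α] (w : List α) : ℕ → α :=
  fun n => w.getD (n % w.length) default

/-- The generating permutations of the automaton group: permutations of `A*` that
agree with the action of some state. -/
def Mealy.genSet {Q A : Type*} (M : Mealy Q A) : Set (Equiv.Perm (List A)) :=
  {σ | ∃ q : Q, ∀ w, σ w = M.act q w}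

/-- The group `𝒢(A)` generated by an invertible Mealy automaton, as a group of
permutations of the tree `A*`. -/
def Mealy.autGroup {Q A : Type*} (M : Mealy Q A) : Subgroup (Equiv.Perm (List A)) :=
  Subgroup.closure M.genSet

/-- `𝒢(A)` has all trivial stabilizers in the boundary `A^ω`: the only element of
the group fixing every finite prefix of some infinite word is the identity. -/
def Mealy.AllTrivialBoundaryStabilizers {Q A : Type*} (M : Mealy Q A) : Prop :=
  ∀ u : ℕ → A, ∀ g ∈ M.autGroup,
    (∀ n : ℕ, g (pre u n) = pre u n) → g = 1

namespace AutoAux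

open Mealy

variable {Q A : Type*}

theorem act_nil (M : Mealy Q A) (q : Q) : M.act q [] = [] := rfl

theorem act_cons (M : Mealy Q A) (q : Q) (a : A) (w : List A) :
    M.act q (a :: w) = M.out q a :: M.act (M.step q a) w := rfl

theorem run_nil (M : Mealy Q A) (q : Q) : M.run q [] = q := rfl

theorem run_cons (M : Mealy Q A) (q : Q) (a : A) (w : List A) :
    M.run q (a :: w) = M.run (M.step q a) w := rfl

theorem dual_act_nil (M : Mealy Q A) (x : A) : M.dual.act x ([] : List Q) = [] := rfl

theorem dual_act_cons (M : Mealy Q A) (x : A) (p : Q) (ρ : List Q) :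
    M.dual.act x (p :: ρ) = M.step p x :: M.dual.act (M.out p x) ρ := rfl

theorem act_length (M : Mealy Q A) : ∀ (w : List A) (q : Q), (M.act q w).length = w.length
  | [], _ => rfl
  | a :: w, q => by
    rw [act_cons, List.length_cons, List.length_cons, act_length M w]

theorem act_append (M : Mealy Q A) : ∀ (x : List A) (q : Q) (y : List A),
    M.act q (x ++ y) = M.act q x ++ M.act (M.run q x) y
  | [], _, _ => rfl
  | a :: x, q, y => by
    rw [List.cons_append, act_cons, act_cons, run_cons, act_append M x, List.cons_append]

theorem act_take (M : Mealy Q A) : ∀ (w : List A) (n : ℕ) (q : Q),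
    M.act q (w.take n) = (M.act q w).take n
  | [], n, q => by simp [act_nil]
  | a :: w, 0, q => rfl
  | a :: w, n + 1, q => by
    rw [List.take_succ_cons, act_cons, act_cons, List.take_succ_cons, act_take M w n]

theorem act_injective (M : Mealy Q A) (h : ∀ s, Function.Bijective (M.out s)) :
    ∀ (l1 : List A) (s : Q) (l2 : List A), M.act s l1 = M.act s l2 → l1 = l2
  | [], _, [], _ => rfl
  | [], s, b :: t, hl => by simp [act_nil, act_cons] at hl
  | a :: w, s, [], hl => by simp [act_nil, act_cons] at hl
  | a :: w, s, b :: t, hl => by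
    rw [act_cons, act_cons] at hl
    injection hl with h1 h2
    obtain rfl : a = b := (h s).1 h1
    rw [act_injective M h w _ t h2]

theorem act_surjective (M : Mealy Q A) (h : ∀ s, Function.Bijective (M.out s)) :
    ∀ (l : List A) (s : Q), ∃ l', M.act s l' = l
  | [], _ => ⟨[], rfl⟩
  | b :: t, s => by
    obtain ⟨a, ha⟩ := (h s).2 b
    obtain ⟨l', hl'⟩ := act_surjective M h t (M.step s a)
    exact ⟨a :: l', by rw [act_cons, ha, hl']⟩

theorem act_bijective (M : Mealy Q A) (h : ∀ s, Function.Bijective (M.out s)) (s : Q) :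
    Function.Bijective (M.act s) :=
  ⟨fun l1 l2 hl => act_injective M h l1 s l2 hl, fun l => act_surjective M h l s⟩

/-- `Tw M b` : the transformation of state words obtained by processing the letters of
`b` through the dual automaton, first letter first. -/
def Tw (M : Mealy Q A) : List A → List Q → List Q
  | [], ρ => ρ
  | x :: xs, ρ => Tw M xs (M.dual.act x ρ)

theorem Tw_nil (M : Mealy Q A) (ρ : List Q) : Tw M [] ρ = ρ := rfl

theorem Tw_cons (M : Mealy Q A) (x : A) (xs : List A) (ρ : List Q) :
    Tw M (x :: xs) ρ = Tw M xs (M.dual.act x ρ) := rfl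

theorem Tw_nil_state (M : Mealy Q A) : ∀ b : List A, Tw M b ([] : List Q) = []
  | [] => rfl
  | x :: xs => by rw [Tw_cons, dual_act_nil, Tw_nil_state M xs]

theorem Tw_cons_state (M : Mealy Q A) :
    ∀ (b : List A) (p : Q) (ρ : List Q),
      Tw M b (p :: ρ) = M.run p b :: Tw M (M.act p b) ρ
  | [], _, _ => rfl
  | x :: xs, p, ρ => by
    rw [Tw_cons, dual_act_cons, Tw_cons_state M xs, run_cons, act_cons, Tw_cons]

theorem Tw_id_run (M : Mealy Q A) {b : List A} (h : Tw M b = id) (p : Q) :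
    M.run p b = p := by
  have h1 := congrFun h [p]
  rw [Tw_cons_state, Tw_nil_state] at h1
  exact (List.cons.injEq _ _ _ _ ▸ h1).1

theorem Tw_id_act (M : Mealy Q A) {b : List A} (h : Tw M b = id) (p : Q) :
    Tw M (M.act p b) = id := by
  funext ρ
  have h1 := congrFun h (p :: ρ)
  rw [Tw_cons_state] at h1
  exact (List.cons.injEq _ _ _ _ ▸ h1).2

/-- `seg u i m` is the word `u i, u (i+1), ..., u (i+m-1)`. -/
def seg {α : Type*} (u : ℕ → α) : ℕ → ℕ → List α
  | _, 0 => []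
  | i, m + 1 => u i :: seg u (i + 1) m

theorem seg_zero {α : Type*} (u : ℕ → α) (i : ℕ) : seg u i 0 = [] := rfl

theorem seg_succ {α : Type*} (u : ℕ → α) (i m : ℕ) :
    seg u i (m + 1) = u i :: seg u (i + 1) m := rfl

theorem seg_length {α : Type*} (u : ℕ → α) : ∀ (m i : ℕ), (seg u i m).length = m
  | 0, _ => rfl
  | m + 1, i => by rw [seg_succ, List.length_cons, seg_length u m]

theorem seg_getElem {α : Type*} (u : ℕ → α) :
    ∀ (m i j : ℕ) (h : j < (seg u i m).length), (seg u i m)[j] = u (i + j)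
  | 0, i, j, h => by rw [seg_length] at h; omega
  | m + 1, i, 0, h => by simp [seg_succ]
  | m + 1, i, j + 1, h => by
    simp only [seg_succ, List.getElem_cons_succ]
    rw [seg_getElem u m (i + 1) j (by rw [seg_length]; rw [seg_length] at h; omega)]
    congr 1
    omega

theorem pre_eq_seg {α : Type*} (u : ℕ → α) (m : ℕ) : pre u m = seg u 0 m := by
  apply List.ext_getElem
  · simp [pre, seg_length]
  · intro i h1 h2
    rw [seg_getElem u m 0 i h2, Nat.zero_add]
    simp [pre]

theorem seg_per {α : Type*} (u : ℕ → α) (c : ℕ) (hper : ∀ n, u (n + c) = u n) :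
    ∀ (m i : ℕ), seg u (i + c) m = seg u i m
  | 0, _ => rfl
  | m + 1, i => by
    rw [seg_succ, seg_succ, hper i]
    congr 1
    rw [show i + c + 1 = (i + 1) + c by omega, seg_per u c hper m (i + 1)]

theorem D0 (M : Mealy Q A) (qs : ℕ → Q) (as : ℕ → A)
    (hq : ∀ n, qs (n + 1) = M.step (qs n) (as n))
    (ha : ∀ n, as (n + 1) = M.out (qs n) (as n)) :
    ∀ (m i : ℕ), M.dual.act (as i) (seg qs i m) = seg qs (i + 1) m
  | 0, i => by rw [seg_zero, seg_zero, dual_act_nil]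
  | m + 1, i => by
    rw [seg_succ, seg_succ, dual_act_cons, ← hq i, ← ha i, D0 M qs as hq ha m (i + 1)]

theorem D1 (M : Mealy Q A) (qs : ℕ → Q) (as : ℕ → A)
    (hq : ∀ n, qs (n + 1) = M.step (qs n) (as n))
    (ha : ∀ n, as (n + 1) = M.out (qs n) (as n)) :
    ∀ (k i m : ℕ), Tw M (seg as i k) (seg qs i m) = seg qs (i + k) m
  | 0, i, m => by rw [seg_zero, Tw_nil, Nat.add_zero]
  | k + 1, i, m => by
    rw [seg_succ, Tw_cons, D0 M qs as hq ha m i, D1 M qs as hq ha k (i + 1) m]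
    congr 1
    omega

noncomputable def tau (M : Mealy Q A) (hrev : M.IsReversible) (x : A) :
    Equiv.Perm (List Q) :=
  Equiv.ofBijective _ (act_bijective M.dual (fun s => hrev s) x)

theorem tau_apply (M : Mealy Q A) (hrev : M.IsReversible) (x : A) (ρ : List Q) :
    tau M hrev x ρ = M.dual.act x ρ := rfl

noncomputable def gprod (M : Mealy Q A) (hrev : M.IsReversible) : List A → Equiv.Perm (List Q)
  | [] => 1
  | x :: xs => gprod M hrev xs * tau M hrev x

theorem gprod_mem (M : Mealy Q A) (hrev : M.IsReversible) :
    ∀ b : List A, gprod M hrev b ∈ M.dual.autGroup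
  | [] => one_mem _
  | x :: xs =>
    mul_mem (gprod_mem M hrev xs) (Subgroup.subset_closure ⟨x, fun _ => rfl⟩)

theorem gprod_apply (M : Mealy Q A) (hrev : M.IsReversible) :
    ∀ (b : List A) (ρ : List Q), gprod M hrev b ρ = Tw M b ρ
  | [], _ => rfl
  | x :: xs, ρ => by
    show (gprod M hrev xs * tau M hrev x) ρ = _
    rw [Equiv.Perm.mul_apply, gprod_apply M hrev xs, Tw_cons, tau_apply]

/-- The `c`-periodic infinite word with fundamental block `b`. -/
def pb {α : Type*} (d : α) (c : ℕ) (b : List α) : ℕ → α := fun n => b.getD (n % c) d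

theorem getD_eq {α : Type*} {l : List α} {n : ℕ} (d : α) (h : n < l.length) :
    l.getD n d = l[n] := by
  rw [List.getD_eq_getElem?_getD, List.getElem?_eq_getElem h, Option.getD_some]

theorem pre_zero {α : Type*} (u : ℕ → α) : pre u 0 = [] := rfl

theorem pre_length {α : Type*} (u : ℕ → α) (n : ℕ) : (pre u n).length = n := by
  simp [pre]

theorem pre_succ {α : Type*} (u : ℕ → α) (n : ℕ) : pre u (n + 1) = pre u n ++ [u n] := by
  unfold pre
  rw [List.ofFn_succ']
  rw [List.concat_eq_append]
  congr 1

theorem pre_pb_of_le {α : Type*} (d : α) {c : ℕ} {b : List α} (hb : b.length = c)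
    {n : ℕ} (hn : n ≤ c) : pre (pb d c b) n = b.take n := by
  apply List.ext_getElem
  · rw [pre_length, List.length_take, hb, Nat.min_eq_left hn]
  · intro i h1 h2
    rw [pre_length] at h1
    have hic : i < c := lt_of_lt_of_le h1 hn
    have hib : i < b.length := by omega
    simp only [pre, List.getElem_ofFn, pb]
    rw [Nat.mod_eq_of_lt hic, getD_eq d hib, List.getElem_take]

theorem pre_pb_add {α : Type*} (d : α) {c : ℕ} {b : List α} (hb : b.length = c) :
    ∀ m : ℕ, pre (pb d c b) (c + m) = b ++ pre (pb d c b) m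
  | 0 => by
    rw [Nat.add_zero, pre_pb_of_le d hb (le_refl c), ← hb, List.take_length, pre_zero,
      List.append_nil]
  | m + 1 => by
    rw [show c + (m + 1) = (c + m) + 1 by omega, pre_succ, pre_pb_add d hb m, pre_succ,
      List.append_assoc]
    congr 3
    simp [pb, Nat.add_mod_left]

theorem act_pre_pb (M : Mealy Q A) (d : A) {c : ℕ} (hc : 0 < c) {b : List A}
    (hb : b.length = c) (hrun : ∀ p, M.run p b = p) (q : Q) :
    ∀ n, M.act q (pre (pb d c b) n) = pre (pb d c (M.act q b)) n := by
  have hb' : (M.act q b).length = c := by rw [act_length]; exact hb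
  intro n
  induction n using Nat.strong_induction_on with
  | _ n ih =>
    rcases le_or_gt n c with h | h
    · rw [pre_pb_of_le d hb h, pre_pb_of_le d hb' h, act_take]
    · rw [show n = c + (n - c) by omega, pre_pb_add d hb, pre_pb_add d hb', act_append,
        hrun q, ih _ (by omega)]

theorem key_P (M : Mealy Q A) [Finite A] (d : A) {c : ℕ} (hc : 0 < c) :
    ∀ g ∈ M.autGroup, ∀ b : List A, b.length = c → Tw M b = id →
      ∃ b' : List A, b'.length = c ∧ Tw M b' = id ∧
        ∀ n, g (pre (pb d c b) n) = pre (pb d c b') n := by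
  intro g hg
  induction hg using Subgroup.closure_induction with
  | mem σ hσ =>
    intro b hb hTw
    obtain ⟨q, hq⟩ := hσ
    refine ⟨M.act q b, by rw [act_length]; exact hb, Tw_id_act M hTw q, fun n => ?_⟩
    rw [hq]
    exact act_pre_pb M d hc hb (fun p => Tw_id_run M hTw p) q n
  | one =>
    intro b hb hTw
    exact ⟨b, hb, hTw, fun n => rfl⟩
  | mul x y hx hy px py =>
    intro b hb hTw
    obtain ⟨b1, hb1, hT1, h1⟩ := py b hb hTw
    obtain ⟨b2, hb2, hT2, h2⟩ := px b1 hb1 hT1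
    exact ⟨b2, hb2, hT2, fun n => by rw [Equiv.Perm.mul_apply, h1 n, h2 n]⟩
  | inv x hx px =>
    intro b hb hTw
    classical
    let S := {l : List A // l.length = c ∧ Tw M l = id}
    have hSfin : Finite S := by
      apply Finite.of_injective (fun lS : S => (fun i : Fin c => lS.1.getD i d))
      intro l1 l2 h12
      apply Subtype.ext
      apply List.ext_getElem (by rw [l1.2.1, l2.2.1])
      intro i h1 h2
      have h3 := congrFun h12 ⟨i, by rw [← l1.2.1]; exact h1⟩
      simp only [Fin.val_mk] at h3
      rw [getD_eq d h1, getD_eq d h2] at h3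
      exact h3
    let f : S → S := fun lS =>
      ⟨(px lS.1 lS.2.1 lS.2.2).choose, (px lS.1 lS.2.1 lS.2.2).choose_spec.1,
        (px lS.1 lS.2.1 lS.2.2).choose_spec.2.1⟩
    have hfinj : Function.Injective f := by
      intro l1 l2 h12
      have hval : (px l1.1 l1.2.1 l1.2.2).choose = (px l2.1 l2.2.1 l2.2.2).choose :=
        congrArg Subtype.val h12
      have hp1 := (px l1.1 l1.2.1 l1.2.2).choose_spec.2.2
      have hp2 := (px l2.1 l2.2.1 l2.2.2).choose_spec.2.2
      have hpre : ∀ n, pre (pb d c l1.1) n = pre (pb d c l2.1) n := by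
        intro n
        apply x.injective
        rw [hp1 n, hp2 n, hval]
      have htake : ∀ l : List A, l.length = c → List.take c l = l := fun l hl => by
        rw [← hl, List.take_length]
      have hcc := hpre c
      rw [pre_pb_of_le d l1.2.1 (le_refl c), pre_pb_of_le d l2.2.1 (le_refl c),
        htake _ l1.2.1, htake _ l2.2.1] at hcc
      exact Subtype.ext hcc
    have hfsurj : Function.Surjective f := Finite.injective_iff_surjective.mp hfinj
    obtain ⟨⟨b0, hb0l, hb0T⟩, hfb0⟩ := hfsurj ⟨b, hb, hTw⟩
    have hval : (px b0 hb0l hb0T).choose = b := congrArg Subtype.val hfb0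
    have hp := (px b0 hb0l hb0T).choose_spec.2.2
    refine ⟨b0, hb0l, hb0T, fun n => ?_⟩
    rw [← hval, ← hp n, Equiv.Perm.inv_def, Equiv.symm_apply_apply]

end AutoAux

/-- For a reversible invertible Mealy automaton `A` with `𝒢(A)` infinite, at most
one of the two groups `𝒢(A)` and `𝒢(∂A)` (the group generated by the dual
automaton) can have all trivial stabilizers of boundary points. -/
theorem not_both_trivial_boundary_stabilizers {Q A : Type}
    [Fintype Q] [Fintype A] (M : Mealy Q A)
    (hrev : M.IsReversible) (hinv : M.IsInvertible)
    (hInf : Infinite M.autGroup) :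
    ¬ (M.AllTrivialBoundaryStabilizers ∧ M.dual.AllTrivialBoundaryStabilizers) := by
  rintro ⟨hM, hD⟩
  rcases isEmpty_or_nonempty A with hA | hA
  · -- empty alphabet: the group is trivial, contradicting `hInf`
    haveI hsub : Subsingleton (List A) := ⟨fun l1 l2 => by
      cases l1 with
      | nil =>
        cases l2 with
        | nil => rfl
        | cons a _ => exact isEmptyElim a
      | cons a _ => exact isEmptyElim a⟩
    haveI hsubP : Subsingleton (Equiv.Perm (List A)) :=
      ⟨fun e f => Equiv.ext fun x => Subsingleton.elim _ _⟩
    haveI hfinP : Finite (Equiv.Perm (List A)) := Finite.of_subsingleton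
    have hfin : Finite M.autGroup := Subtype.finite
    exact hfin.not_infinite hInf
  rcases isEmpty_or_nonempty Q with hQ | hQ
  · -- empty state set: the generating set is empty
    have hgen : M.genSet = ∅ := by
      ext σ
      simp only [Mealy.genSet, Set.mem_setOf_eq, Set.mem_empty_iff_false, iff_false]
      rintro ⟨q, -⟩
      exact isEmptyElim q
    have hbot : M.autGroup = ⊥ := by
      rw [Mealy.autGroup, hgen, Subgroup.closure_empty]
    haveI hsub : Subsingleton M.autGroup := ⟨fun a b => by
      apply Subtype.ext
      have ha : (a : Equiv.Perm (List A)) = 1 :=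
        Subgroup.mem_bot.mp (by rw [← hbot]; exact a.2)
      have hb : (b : Equiv.Perm (List A)) = 1 :=
        Subgroup.mem_bot.mp (by rw [← hbot]; exact b.2)
      rw [ha, hb]⟩
    have hfin : Finite M.autGroup := Finite.of_subsingleton
    exact hfin.not_infinite hInf
  -- main case
  obtain ⟨q0⟩ := hQ
  obtain ⟨d⟩ := hA
  set F : Q × A → Q × A := fun p => (M.step p.1 p.2, M.out p.1 p.2) with hF
  -- find a periodic point of `F`
  obtain ⟨i0, j0, hij, hFij⟩ :=
    Finite.exists_ne_map_eq_of_infinite (fun n : ℕ => F^[n] (q0, d))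
  obtain ⟨i, j, hlt, heq⟩ : ∃ i j, i < j ∧ F^[i] (q0, d) = F^[j] (q0, d) := by
    rcases lt_or_gt_of_ne hij with h | h
    · exact ⟨i0, j0, h, hFij⟩
    · exact ⟨j0, i0, h, hFij.symm⟩
  set y : Q × A := F^[i] (q0, d) with hy'
  set c : ℕ := j - i with hc'
  have hc : 0 < c := by omega
  have hy : F^[c] y = y := by
    rw [hy', ← Function.iterate_add_apply, show c + i = j by omega, ← heq]
  set qs : ℕ → Q := fun n => (F^[n] y).1 with hqs
  set as : ℕ → A := fun n => (F^[n] y).2 with has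
  have hqstep : ∀ n, qs (n + 1) = M.step (qs n) (as n) := by
    intro n
    rw [hqs, has]
    simp only [Function.iterate_succ_apply']
    rfl
  have hastep : ∀ n, as (n + 1) = M.out (qs n) (as n) := by
    intro n
    rw [hqs, has]
    simp only [Function.iterate_succ_apply']
    rfl
  have hper : ∀ n, qs (n + c) = qs n := by
    intro n
    rw [hqs]
    simp only [Function.iterate_add_apply, hy]
  -- the strongly neutral word `b0`
  set b0 : List A := AutoAux.seg as 0 c with hb0
  have hb0len : b0.length = c := AutoAux.seg_length as c 0
  have hfix : ∀ m, (AutoAux.gprod M hrev b0) (pre qs m) = pre qs m := by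
    intro m
    rw [AutoAux.gprod_apply, AutoAux.pre_eq_seg, hb0,
      AutoAux.D1 M qs as hqstep hastep c 0 m, Nat.zero_add]
    have := AutoAux.seg_per qs c hper m 0
    rw [Nat.zero_add] at this
    exact this
  have hone : AutoAux.gprod M hrev b0 = 1 :=
    hD qs _ (AutoAux.gprod_mem M hrev b0) hfix
  have hTw0 : AutoAux.Tw M b0 = id := by
    funext ρ
    have h1 : (AutoAux.gprod M hrev b0) ρ = (1 : Equiv.Perm (List Q)) ρ := by rw [hone]
    rw [AutoAux.gprod_apply] at h1
    simpa using h1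
  -- finiteness of the automaton group
  have hP := AutoAux.key_P M d hc
  have hinj : Function.Injective (fun g : M.autGroup =>
      (fun i : Fin c => ((hP g.1 g.2 b0 hb0len hTw0).choose).getD i d)) := by
    intro g1 g2 h12
    obtain ⟨hl1, hT1, hpre1⟩ := (hP g1.1 g1.2 b0 hb0len hTw0).choose_spec
    obtain ⟨hl2, hT2, hpre2⟩ := (hP g2.1 g2.2 b0 hb0len hTw0).choose_spec
    have hval : (hP g1.1 g1.2 b0 hb0len hTw0).choose = (hP g2.1 g2.2 b0 hb0len hTw0).choose := by
      apply List.ext_getElem (by rw [hl1, hl2])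
      intro i h1 h2
      rw [hl1] at h1
      have h3 := congrFun h12 ⟨i, h1⟩
      simp only [Fin.val_mk] at h3
      rw [AutoAux.getD_eq d (by rw [hl1]; exact h1), AutoAux.getD_eq d (by rw [hl2]; exact h1)] at h3
      exact h3
    have hsame : ∀ n, g1.1 (pre (AutoAux.pb d c b0) n) = g2.1 (pre (AutoAux.pb d c b0) n) := by
      intro n
      rw [hpre1 n, hpre2 n, hval]
    have hfixes : ∀ n, (g1.1⁻¹ * g2.1) (pre (AutoAux.pb d c b0) n) = pre (AutoAux.pb d c b0) n := by
      intro n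
      rw [Equiv.Perm.mul_apply, ← hsame n, Equiv.Perm.inv_def, Equiv.symm_apply_apply]
    have h1 : g1.1⁻¹ * g2.1 = 1 :=
      hM (AutoAux.pb d c b0) _ (mul_mem (inv_mem g1.2) g2.2) hfixes
    exact Subtype.ext (inv_mul_eq_one.mp h1)
  have hfin : Finite M.autGroup := Finite.of_injective _ hinj
  exact hfin.not_infinite hInf
end

section
/- Let A = (Q, A, ·, ∘) be an invertible Mealy automaton and S the semigroup generated by the enriched dual ∂A^− acting on (Q ∪ Q^{-1})^ω. If the orbit of a periodic point y^ω (y a finite word over Q ∪ Q^{-1}) under S is finite, then every point in this orbit is itself a periodic point z^ω with |z| a multiple of |y|. -/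
section Aux
open Mealy

theorem aux_run_append {Q A : Type*} (M : Mealy Q A) (q : Q) (w1 w2 : List A) :
    M.run q (w1 ++ w2) = M.run (M.run q w1) w2 := List.foldl_append ..

theorem aux_run_bijective {Q A : Type*} (M : Mealy Q A) (hrev : M.IsReversible) (w : List A) :
    Function.Bijective (fun q => M.run q w) := by
  induction w with
  | nil => exact Function.bijective_id
  | cons a t ih =>
      have h : (fun q => M.run q (a :: t)) = (fun q => M.run q t) ∘ (fun q => M.step q a) := rfl
      rw [h]; exact ih.comp (hrev a)

theorem aux_exists_iterate_id {S : Type*} [Finite S] (f : S → S) (hf : Function.Bijective f) :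
    ∃ m, 0 < m ∧ ∀ s, f^[m] s = s := by
  classical
  obtain ⟨i, j, hne, h⟩ := Finite.exists_ne_map_eq_of_infinite (fun n : ℕ => f^[n])
  rcases hne.lt_or_gt with hij | hij
  · refine ⟨j - i, by omega, fun s => ?_⟩
    have h2 : f^[i] (f^[j - i] s) = f^[i] s := by
      rw [← Function.iterate_add_apply]
      have : i + (j - i) = j := by omega
      rw [this, h]
    exact hf.injective.iterate i h2
  · refine ⟨i - j, by omega, fun s => ?_⟩
    have h2 : f^[j] (f^[i - j] s) = f^[j] s := by
      rw [← Function.iterate_add_apply]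
      have : j + (i - j) = i := by omega
      rw [this, h]
    exact hf.injective.iterate j h2

theorem aux_pre_add {α : Type*} (u : ℕ → α) (a b : ℕ) :
    pre u (a + b) = pre u a ++ pre (fun n => u (a + n)) b := by
  simp [pre, List.ofFn_add]

theorem aux_pre_shift_eq {α : Type*} (u : ℕ → α) (p : ℕ) (hu : ∀ n, u (n + p) = u n) :
    (fun n => u (p + n)) = u := by
  funext n; rw [Nat.add_comm]; exact hu n

theorem aux_run_pre_mul {Q A : Type*} (M : Mealy Q A) (u : ℕ → A) (p : ℕ)
    (hu : ∀ n, u (n + p) = u n) (m n : ℕ) (q : Q) :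
    M.run q (pre u (m * p + n)) = M.run ((fun s => M.run s (pre u p))^[m] q) (pre u n) := by
  induction m generalizing q with
  | zero => simp
  | succ k ih =>
      have h1 : (k + 1) * p + n = p + (k * p + n) := by ring
      rw [h1, aux_pre_add, aux_pre_shift_eq u p hu, aux_run_append, ih,
        Function.iterate_succ_apply]

theorem aux_actOmega_periodic {Q A : Type*} [Finite Q] (M : Mealy Q A) (hrev : M.IsReversible)
    (u : ℕ → A) (p : ℕ) (hp : 0 < p) (hu : ∀ n, u (n + p) = u n) (q : Q) :
    ∃ r, 0 < r ∧ p ∣ r ∧ ∀ n, M.actOmega q u (n + r) = M.actOmega q u n := by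
  obtain ⟨m, hm, hid⟩ := aux_exists_iterate_id (fun s => M.run s (pre u p))
    (aux_run_bijective M hrev (pre u p))
  refine ⟨m * p, by positivity, ⟨m, (mul_comm ..)⟩, fun n => ?_⟩
  have hper : ∀ k, u (n + k * p) = u n := by
    intro k
    induction k with
    | zero => simp
    | succ k ih => rw [Nat.succ_mul, ← Nat.add_assoc, hu, ih]
  show M.out (M.run q (List.ofFn fun i : Fin (n + m * p) => u i)) (u (n + m * p)) = _
  have h3 : (List.ofFn fun i : Fin (n + m * p) => u i) = pre u (m * p + n) := by
    rw [Nat.add_comm]; rfl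
  rw [h3, aux_run_pre_mul M u p hu, hid q, hper m]; rfl

theorem aux_applyListOmega_periodic {Q A : Type*} [Finite Q] (M : Mealy Q A)
    (hrev : M.IsReversible) (l : List Q) :
    ∀ (u : ℕ → A) (p : ℕ), 0 < p → (∀ n, u (n + p) = u n) →
    ∃ r, 0 < r ∧ p ∣ r ∧ ∀ n, M.applyListOmega l u (n + r) = M.applyListOmega l u n := by
  induction l with
  | nil => exact fun u p hp hu => ⟨p, hp, dvd_refl p, fun n => hu n⟩
  | cons q t ih =>
      intro u p hp hu
      obtain ⟨r, hr, hpr, hper⟩ := aux_actOmega_periodic M hrev u p hp hu q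
      obtain ⟨r', hr', hrr', hper'⟩ := ih (M.actOmega q u) r hr hper
      exact ⟨r', hr', hpr.trans hrr', hper'⟩

theorem aux_edual_reversible {Q A : Type*} [Nonempty A] (M : Mealy Q A)
    (hinv : M.IsInvertible) : M.edual.IsReversible := by
  rintro ⟨q, b⟩
  cases b
  · show Function.Bijective fun a => Function.invFun (M.out q) a
    rw [Function.bijective_iff_has_inverse]
    exact ⟨M.out q, fun a => Function.rightInverse_invFun (hinv q).2 a,
      fun a => Function.leftInverse_invFun (hinv q).1 a⟩
  · exact hinv q

end Aux

/-- If the orbit of a periodic boundary point `y^ω ∈ (Q ∪ Q⁻¹)^ω` under the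
semigroup generated by the enriched dual `∂A⁻` of an invertible Mealy automaton
is finite, then every point of this orbit is itself a periodic point `z^ω` with
`|z|` a (positive) multiple of `|y|`. -/
theorem orbit_of_periodic_finite_all_periodic {Q A : Type}
    [Fintype Q] [Fintype A] [Nonempty A] [Inhabited Q]
    (M : Mealy Q A) (hinv : M.IsInvertible)
    (y : List (Q × Bool)) (hy : y ≠ [])
    (hfin : (M.edual.orbitOmega (periodicWord y)).Finite) :
    ∀ z ∈ M.edual.orbitOmega (periodicWord y),
      ∃ zw : List (Q × Bool), zw ≠ [] ∧ y.length ∣ zw.length ∧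
        z = periodicWord zw := by
  rintro z ⟨l, rfl⟩
  have hp : 0 < y.length := List.length_pos_iff.mpr hy
  have hu : ∀ n, periodicWord y (n + y.length) = periodicWord y n := by
    intro n; simp [periodicWord, Nat.add_mod_right]
  obtain ⟨r, hr, hdvd, hper⟩ := aux_applyListOmega_periodic M.edual
    (aux_edual_reversible M hinv) l (periodicWord y) y.length hp hu
  set z := M.edual.applyListOmega l (periodicWord y) with hz
  refine ⟨pre z r, ?_, ?_, ?_⟩
  · have : (pre z r).length = r := by simp [pre]
    intro hnil; rw [hnil] at this; simp at this; omega
  · have : (pre z r).length = r := by simp [pre]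
    rw [this]; exact hdvd
  · have hlen : (pre z r).length = r := by simp [pre]
    have hmul : ∀ k m, z (m + k * r) = z m := by
      intro k
      induction k with
      | zero => simp
      | succ k ih => intro m; rw [Nat.succ_mul, ← Nat.add_assoc, hper, ih]
    funext n
    have hmod : n % r < r := Nat.mod_lt n hr
    have h1 : periodicWord (pre z r) n = z (n % r) := by
      rw [periodicWord, hlen, List.getD_eq_getElem _ _ (by rw [hlen]; exact hmod)]
      simp [pre]
    rw [h1]
    conv_lhs => rw [← Nat.mod_add_div' n r]
    exact hmul (n / r) (n % r)
end

section
/- Let A = (Q, A, ·, ∘) be a bireversible Mealy automaton. Then the group generated by the enriched automaton A^− (obtained by adding to each transition q →^{a|b} p the inverse transition p →^{a^{-1}|b^{-1}} q, acting on the tree over the doubled alphabet A ∪ A^{-1}) is isomorphic to 𝒢(A). -/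
namespace Mealy

variable {Q A : Type*}

-- ============ auxiliary development ============

open Function

section EnrichSimp
variable [Nonempty Q] (M : Mealy Q A)

@[simp] theorem enrich_out_true (q : Q) (a : A) :
    M.enrich.out q (a, true) = (M.out q a, true) := rfl

@[simp] theorem enrich_out_false (q : Q) (a : A) :
    M.enrich.out q (a, false)
      = (M.out (Function.invFun (fun p => M.step p a) q) a, false) := rfl

@[simp] theorem enrich_step_true (q : Q) (a : A) :
    M.enrich.step q (a, true) = M.step q a := rfl

@[simp] theorem enrich_step_false (q : Q) (a : A) :
    M.enrich.step q (a, false) = Function.invFun (fun p => M.step p a) q := rfl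

end EnrichSimp

/-- Output letter and section of a word of (signed) states at a single letter. -/
noncomputable def oS [Nonempty A] (M : Mealy Q A) : List (Q × Bool) → A → A × List (Q × Bool)
  | [], a => (a, [])
  | (q, true) :: w, a =>
      (M.out q (oS M w a).1, (M.step q (oS M w a).1, true) :: (oS M w a).2)
  | (q, false) :: w, a =>
      (Function.invFun (M.out q) (oS M w a).1,
        (M.step q (Function.invFun (M.out q) (oS M w a).1), false) :: (oS M w a).2)

theorem evalW_nil [Nonempty A] (M : Mealy Q A) : ∀ w, M.evalW w [] = [] := by
  intro w
  induction w with
  | nil => rfl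
  | cons x w ih =>
    obtain ⟨q, b⟩ := x
    cases b <;> simp [evalW, ih, act, actInv]

theorem evalW_cons [Nonempty A] (M : Mealy Q A) (w : List (Q × Bool)) (a : A) (v : List A) :
    M.evalW w (a :: v) = (M.oS w a).1 :: M.evalW (M.oS w a).2 v := by
  induction w generalizing a v with
  | nil => rfl
  | cons x w ih =>
    obtain ⟨q, b⟩ := x
    cases b <;> simp [evalW, ih, act, actInv, oS]

theorem oS_len [Nonempty A] (M : Mealy Q A) (w : List (Q × Bool)) (a : A) :
    (M.oS w a).2.length = w.length := by
  induction w with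
  | nil => rfl
  | cons x w ih =>
    obtain ⟨q, b⟩ := x
    cases b <;> simp [oS, ih]

section Bi

variable [Nonempty A] [Nonempty Q] {M : Mealy Q A} (hbi : M.IsBireversible)
include hbi

theorem out_invFun (q : Q) (b : A) : M.out q (invFun (M.out q) b) = b :=
  invFun_eq ((hbi.1 q).2 b)

theorem invFun_out (q : Q) (b : A) : invFun (M.out q) (M.out q b) = b :=
  leftInverse_invFun (hbi.1 q).1 b

theorem invFun_step (a : A) (q : Q) : invFun (fun p => M.step p a) (M.step q a) = q :=
  leftInverse_invFun (hbi.2.1 a).1 q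

theorem step_invFun (a : A) (q : Q) : M.step (invFun (fun p => M.step p a) q) a = q :=
  invFun_eq ((hbi.2.1 a).2 q)

theorem enrich_out_inj (q : Q) : Injective (M.enrich.out q) := by
  rintro ⟨x, bx⟩ ⟨y, by'⟩ h
  cases bx <;> cases by' <;> simp at h
  · -- both false
    set rx := invFun (fun p => M.step p x) q with hrxdef
    set ry := invFun (fun p => M.step p y) q with hrydef
    have hrx : M.step rx x = q := step_invFun hbi x q
    have hry : M.step ry y = q := step_invFun hbi y q
    have hgx : M.step rx (invFun (M.out rx) (M.out rx x)) = q := by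
      rw [invFun_out hbi]; exact hrx
    have hgy : M.step ry (invFun (M.out ry) (M.out rx x)) = q := by
      rw [h, invFun_out hbi]; exact hry
    have hr : rx = ry := (hbi.2.2 (M.out rx x)).1 (hgx.trans hgy.symm)
    have hx : M.out rx x = M.out rx y := by rw [h, hr]
    have : x = y := (hbi.1 rx).1 hx
    simp [this]
  · -- both true
    simp [(hbi.1 q).1 h]

theorem enrich_invFun_true (q : Q) (b : A) :
    invFun (M.enrich.out q) (b, true) = (invFun (M.out q) b, true) := by
  apply enrich_out_inj hbi q
  have h1 : M.enrich.out q (invFun (M.out q) b, true) = (b, true) := by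
    simp [out_invFun hbi]
  rw [h1]
  exact invFun_eq ⟨(invFun (M.out q) b, true), h1⟩

theorem enrich_invFun_false (q : Q) (c : A) :
    invFun (M.enrich.out (M.step q c)) (M.out q c, false) = (c, false) := by
  apply enrich_out_inj hbi (M.step q c)
  have h1 : M.enrich.out (M.step q c) (c, false) = (M.out q c, false) := by
    simp [invFun_step hbi]
  rw [h1]
  exact invFun_eq ⟨(c, false), h1⟩

theorem oS_pos (w : List (Q × Bool)) (a : A) :
    M.enrich.oS w (a, true) = (((M.oS w a).1, true), (M.oS w a).2) := by
  induction w with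
  | nil => rfl
  | cons x w ih =>
    obtain ⟨q, b⟩ := x
    cases b <;> simp [oS, ih, enrich_invFun_true hbi]

theorem enrich_invFun_false' (q : Q) (b : A) :
    invFun (M.enrich.out (M.step q (invFun (M.out q) b))) (b, false)
      = (invFun (M.out q) b, false) := by
  have h := enrich_invFun_false hbi q (invFun (M.out q) b)
  rwa [out_invFun hbi] at h

theorem oS_flip (w : List (Q × Bool)) (a : A) :
    M.enrich.oS (M.oS w a).2 (a, false) = (((M.oS w a).1, false), w) := by
  induction w with
  | nil => rfl
  | cons x w ih =>
    obtain ⟨q, b⟩ := x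
    cases b
    · -- negative head
      simp only [oS]
      rw [ih]
      rw [enrich_invFun_false' hbi]
      simp [invFun_step hbi]
    · -- positive head
      simp only [oS]
      rw [ih]
      simp [invFun_step hbi]

theorem oS_inj (a : A) : ∀ w₁ w₂ : List (Q × Bool),
    (M.oS w₁ a).2 = (M.oS w₂ a).2 → w₁ = w₂ := by
  intro w₁
  induction w₁ with
  | nil =>
    intro w₂ h
    cases w₂ with
    | nil => rfl
    | cons y s => obtain ⟨p, bp⟩ := y; cases bp <;> simp [oS] at h
  | cons x t ih =>
    intro w₂ h
    cases w₂ with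
    | nil => obtain ⟨p, bp⟩ := x; cases bp <;> simp [oS] at h
    | cons y s =>
      obtain ⟨q, bq⟩ := x
      obtain ⟨p, bp⟩ := y
      cases bq <;> cases bp <;> simp [oS] at h
      · obtain ⟨h1, h2⟩ := h
        have ht : t = s := ih s h2
        subst ht
        have : q = p := (hbi.2.2 (M.oS t a).1).1 h1
        simp [this]
      · obtain ⟨h1, h2⟩ := h
        have ht : t = s := ih s h2
        subst ht
        have : q = p := (hbi.2.1 (M.oS t a).1).1 h1
        simp [this]

theorem mem_W_oS {w : List (Q × Bool)} (hw : ∀ v, M.evalW w v = v) (a : A) :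
    (M.oS w a).1 = a ∧ ∀ v, M.evalW (M.oS w a).2 v = v := by
  have h : ∀ v, (M.oS w a).1 :: M.evalW (M.oS w a).2 v = a :: v := by
    intro v; rw [← evalW_cons]; exact hw (a :: v)
  exact ⟨(List.cons.injEq _ _ _ _ ▸ h []).1, fun v => (List.cons.injEq _ _ _ _ ▸ h v).2⟩

theorem exists_oS_preimage [Finite Q] {w : List (Q × Bool)}
    (hw : ∀ v, M.evalW w v = v) (a : A) :
    ∃ w', (∀ v, M.evalW w' v = v) ∧ (M.oS w' a).2 = w := by
  classical
  let S : Set (List (Q × Bool)) :=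
    {u | (∀ v, M.evalW u v = v) ∧ u.length = w.length}
  have hSfin : S.Finite :=
    Set.Finite.subset (List.finite_length_eq _ w.length) fun u hu => hu.2
  haveI : Finite S := hSfin.to_subtype
  let F : S → S := fun u =>
    ⟨(M.oS u.1 a).2, (mem_W_oS hbi u.2.1 a).2, by rw [oS_len]; exact u.2.2⟩
  have hFinj : Function.Injective F := by
    intro u₁ u₂ h
    exact Subtype.ext (oS_inj hbi a u₁.1 u₂.1 (congrArg Subtype.val h))
  have hFsurj : Function.Surjective F := Finite.injective_iff_surjective.mp hFinj
  obtain ⟨u, hu⟩ := hFsurj ⟨w, hw, rfl⟩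
  exact ⟨u.1, u.2.1, congrArg Subtype.val hu⟩

theorem key_section [Finite Q] {w : List (Q × Bool)}
    (hw : ∀ v, M.evalW w v = v) (x : A × Bool) :
    (M.enrich.oS w x).1 = x ∧ ∀ v, M.evalW (M.enrich.oS w x).2 v = v := by
  obtain ⟨a, b⟩ := x
  cases b
  · obtain ⟨w', hw', hww'⟩ := exists_oS_preimage hbi hw a
    have h := oS_flip hbi w' a
    rw [hww'] at h
    rw [h]
    exact ⟨by rw [(mem_W_oS hbi hw' a).1], by
      simpa using hw'⟩
  · rw [oS_pos hbi]
    exact ⟨by rw [(mem_W_oS hbi hw a).1], (mem_W_oS hbi hw a).2⟩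

theorem enrich_trivial_of_trivial [Finite Q] :
    ∀ v : List (A × Bool), ∀ w : List (Q × Bool),
      (∀ u, M.evalW w u = u) → M.enrich.evalW w v = v := by
  intro v
  induction v with
  | nil => intro w _; exact evalW_nil _ _
  | cons x t ih =>
    intro w hw
    rw [evalW_cons]
    obtain ⟨h1, h2⟩ := key_section hbi hw x
    rw [h1, ih _ h2]

theorem evalW_map_true (v : List A) : ∀ w : List (Q × Bool),
    M.enrich.evalW w (v.map (·, true)) = (M.evalW w v).map (·, true) := by
  induction v with
  | nil => intro w; rw [List.map_nil, evalW_nil, evalW_nil]; rfl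
  | cons a t ih =>
    intro w
    rw [List.map_cons, evalW_cons, evalW_cons, oS_pos hbi, List.map_cons, ih]

end Bi

theorem enrich_main {Q A : Type}
    [Fintype Q] [Fintype A] [Nonempty A] [Nonempty Q]
    (M : Mealy Q A) (hbi : M.IsBireversible) :
    ∀ w : List (Q × Bool),
      (∀ v : List (A × Bool), M.enrich.evalW w v = v) ↔
      (∀ v : List A, M.evalW w v = v) := by
  intro w
  constructor
  · intro h v
    have h2 := evalW_map_true hbi v w
    rw [h (v.map (·, true))] at h2
    have : Function.Injective (fun a : A => (a, true)) := fun a b hab => by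
      simpa using hab
    exact (List.map_injective_iff.mpr this h2.symm)
  · intro h v
    exact enrich_trivial_of_trivial hbi v w h

end Mealy


/-- For a bireversible Mealy automaton `A`, the canonical epimorphism
`𝒢(A⁻) → 𝒢(A)` is an isomorphism: a word over `Q ∪ Q⁻¹` is a relation of the
enriched automaton `A⁻` (acting on the tree over the doubled alphabet `A ∪ A⁻¹`)
if and only if it is a relation of `A` (acting on the tree over `A`). -/
theorem enrich_relations_eq_relations {Q A : Type}
    [Fintype Q] [Fintype A] [Nonempty A] [Nonempty Q]
    (M : Mealy Q A) (hbi : M.IsBireversible) :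
    ∀ w : List (Q × Bool),
      (∀ v : List (A × Bool), M.enrich.evalW w v = v) ↔
      (∀ v : List A, M.evalW w v = v) :=
  Mealy.enrich_main M hbi
end

section
/- Let A be a bireversible Mealy automaton on states Q and G = 𝒢(∂A^−) the group generated by its enriched dual, acting on (Q ∪ Q^{-1})^ω. For every essentially trivial point v ∈ (Q ∪ Q^{-1})^ω, the Schreier graph of the stabilizer St_G(v) with respect to the generating set is finite; equivalently, St_G(v) has finite index in G. -/
/-- `u` is essentially trivial: the free reductions of its prefixes have uniformly
bounded length. -/
def EssentiallyTrivial {Q : Type*} [DecidableEq Q] (u : ℕ → Q × Bool) : Prop :=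
  ∃ m : ℕ, ∀ n, (FreeGroup.reduce (pre u n)).length ≤ m

section Aux

open Mealy

variable {S Γ : Type*}

/-- The letter produced at a given position by the action of a word of states:
`psi N l w x` is the final output letter when the state word `l` (innermost state
first) processes the word `w` followed by the letter `x`. -/
def psi (N : Mealy S Γ) : List S → List Γ → Γ → Γ
  | [], _, x => x
  | s :: t, w, x => psi N t (N.act s w) (N.out (N.run s w) x)

lemma run_cons (N : Mealy S Γ) (s : S) (a : Γ) (w : List Γ) :
    N.run s (a :: w) = N.run (N.step s a) w := rfl

lemma run_append (N : Mealy S Γ) (s : S) (u w : List Γ) :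
    N.run s (u ++ w) = N.run (N.run s u) w := List.foldl_append ..

lemma act_append (N : Mealy S Γ) (s : S) (u w : List Γ) :
    N.act s (u ++ w) = N.act s u ++ N.act (N.run s u) w := by
  induction u generalizing s with
  | nil => rfl
  | cons a u ih => simp [Mealy.act, ih, run_cons]

lemma pre_succ {α : Type*} (u : ℕ → α) (n : ℕ) :
    pre u (n + 1) = pre u n ++ [u n] := by
  show (List.ofFn fun i : Fin (n + 1) => u i) = _
  rw [List.ofFn_succ', List.concat_eq_append]
  simp [pre]

lemma pre_actOmega (N : Mealy S Γ) (s : S) (u : ℕ → Γ) (n : ℕ) :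
    pre (N.actOmega s u) n = N.act s (pre u n) := by
  induction n with
  | zero => rfl
  | succ n ih =>
      rw [pre_succ, pre_succ, act_append, ih]
      rfl

lemma actOmega_apply (N : Mealy S Γ) (s : S) (u : ℕ → Γ) (n : ℕ) :
    N.actOmega s u n = N.out (N.run s (pre u n)) (u n) := rfl

lemma applyListOmega_nil (N : Mealy S Γ) (u : ℕ → Γ) :
    N.applyListOmega [] u = u := rfl

lemma applyListOmega_cons (N : Mealy S Γ) (s : S) (l : List S) (u : ℕ → Γ) :
    N.applyListOmega (s :: l) u = N.applyListOmega l (N.actOmega s u) := rfl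

lemma applyListOmega_eq_psi (N : Mealy S Γ) (l : List S) (u : ℕ → Γ) (n : ℕ) :
    N.applyListOmega l u n = psi N l (pre u n) (u n) := by
  induction l generalizing u with
  | nil => rfl
  | cons s t ih =>
      rw [applyListOmega_cons, ih, psi, pre_actOmega, actOmega_apply]

/-- The key "pair transparency" property: from any state, reading an inverse pair
of letters outputs an inverse pair and returns to the initial state. -/
def PairTransparent {α : Type*} (N : Mealy S (α × Bool)) : Prop :=
  ∀ (s : S) (q : α) (b : Bool),
    ∃ p, N.out s (q, b) = (p, b) ∧
      N.out (N.step s (q, b)) (q, !b) = (p, !b) ∧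
      N.step (N.step s (q, b)) (q, !b) = s

lemma psi_pair {α : Type*} (N : Mealy S (α × Bool)) (hp : PairTransparent N)
    (l : List S) :
    ∀ (w₁ w₂ : List (α × Bool)) (q : α) (b : Bool) (x : α × Bool),
      psi N l (w₁ ++ (q, b) :: (q, !b) :: w₂) x = psi N l (w₁ ++ w₂) x := by
  induction l with
  | nil => intros; rfl
  | cons s t ih =>
      intro w₁ w₂ q b x
      obtain ⟨p, h1, h2, h3⟩ := hp (N.run s w₁) q b
      have hrun : N.run s (w₁ ++ (q, b) :: (q, !b) :: w₂) = N.run s (w₁ ++ w₂) := by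
        have e1 : N.run s (w₁ ++ (q, b) :: (q, !b) :: w₂)
            = N.run (N.step (N.step (N.run s w₁) (q, b)) (q, !b)) w₂ := by
          rw [run_append]; rfl
        rw [e1, h3, run_append]
      have hact : N.act s (w₁ ++ (q, b) :: (q, !b) :: w₂)
          = N.act s w₁ ++ (p, b) :: (p, !b) :: N.act (N.run s w₁) w₂ := by
        rw [act_append]
        congr 1
        show N.out (N.run s w₁) (q, b) ::
            N.out (N.step (N.run s w₁) (q, b)) (q, !b) ::
            N.act (N.step (N.step (N.run s w₁) (q, b)) (q, !b)) w₂ = _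
        rw [h1, h2, h3]
      have hact' : N.act s (w₁ ++ w₂) = N.act s w₁ ++ N.act (N.run s w₁) w₂ :=
        act_append ..
      rw [psi, psi, hrun, hact, hact', ih]

lemma psi_red {α : Type*} (N : Mealy S (α × Bool)) (hp : PairTransparent N)
    (l : List S) {w w' : List (α × Bool)} (h : FreeGroup.Red w w') (x : α × Bool) :
    psi N l w x = psi N l w' x := by
  induction h with
  | refl => rfl
  | tail _ hstep ih =>
      rw [ih]
      cases hstep with
      | not => exact psi_pair N hp l _ _ _ _ x

section Bireversible

variable {Q A : Type*} [Nonempty A] [Nonempty Q] (M : Mealy Q A)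

lemma edual_pair (hbi : M.IsBireversible) (a : A) (q : Q) (b : Bool) :
    ∃ p, M.edual.out a (q, b) = (p, b) ∧
      M.edual.out (M.edual.step a (q, b)) (q, !b) = (p, !b) ∧
      M.edual.step (M.edual.step a (q, b)) (q, !b) = a := by
  obtain ⟨h1, h2, h3⟩ := hbi
  cases b with
  | true =>
      refine ⟨M.step q a, rfl, ?_, ?_⟩
      · show (M.step q (Function.invFun (M.out q) (M.out q a)), false) = _
        rw [Function.leftInverse_invFun (h1 q).1 a]
        rfl
      · show Function.invFun (M.out q) (M.out q a) = a
        exact Function.leftInverse_invFun (h1 q).1 a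
  | false =>
      refine ⟨M.step q (Function.invFun (M.out q) a), rfl, rfl, ?_⟩
      show M.out q (Function.invFun (M.out q) a) = a
      exact Function.rightInverse_invFun (h1 q).2 a

lemma edual_out_snd (a : A) (x : Q × Bool) : (M.edual.out a x).2 = x.2 := by
  obtain ⟨q, b⟩ := x
  cases b <;> rfl

lemma edual_out_bij (hbi : M.IsBireversible) (a : A) :
    Function.Bijective (M.edual.out a) := by
  obtain ⟨h1, h2, h3⟩ := hbi
  constructor
  · rintro ⟨q, b⟩ ⟨q', b'⟩ h
    have hb : b = b' := by
      have := congrArg Prod.snd h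
      rwa [edual_out_snd, edual_out_snd] at this
    subst hb
    cases b with
    | true =>
        have : M.step q a = M.step q' a := congrArg Prod.fst h
        exact congrArg (·, true) ((h2 a).1 this)
    | false =>
        have : M.step q (Function.invFun (M.out q) a)
            = M.step q' (Function.invFun (M.out q') a) := congrArg Prod.fst h
        exact congrArg (·, false) ((h3 a).1 this)
  · rintro ⟨p, b⟩
    cases b with
    | true =>
        obtain ⟨q, hq⟩ := (h2 a).2 p
        exact ⟨(q, true), by simp only [Mealy.edual] at hq ⊢; rw [hq]⟩
    | false =>
        obtain ⟨q, hq⟩ := (h3 a).2 p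
        exact ⟨(q, false), by simp only [Mealy.edual] at hq ⊢; rw [hq]⟩

lemma withInv_edual_pair (hbi : M.IsBireversible) :
    PairTransparent (M.edual.withInv) := by
  rintro ⟨a, c⟩ q b
  cases c with
  | true =>
      obtain ⟨p, h1, h2, h3⟩ := edual_pair M hbi a q b
      exact ⟨p, h1, h2, by
        show (M.edual.step (M.edual.step a (q, b)) (q, !b), true) = (a, true)
        rw [h3]⟩
  | false =>
      -- the next letter read will be the preimage of `(q,b)` under `edual.out a`
      obtain ⟨⟨q₀, b₀⟩, hq₀⟩ := (edual_out_bij M hbi a).2 (q, b)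
      have hb₀ : b₀ = b := by
        have := congrArg Prod.snd hq₀
        rwa [edual_out_snd] at this
      rw [hb₀] at hq₀
      have hinv : Function.invFun (M.edual.out a) (q, b) = (q₀, b) :=
        (edual_out_bij M hbi a).1 (by
          rw [Function.rightInverse_invFun (edual_out_bij M hbi a).2 (q, b), hq₀])
      obtain ⟨p, h1, h2, h3⟩ := edual_pair M hbi a q₀ b
      have hp : p = q := by
        have := hq₀.symm.trans h1
        exact (congrArg Prod.fst this).symm
      rw [hp] at h1 h2
      set a' := M.edual.step a (q₀, b) with ha'
      have hinv' : Function.invFun (M.edual.out a') (q, !b) = (q₀, !b) :=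
        (edual_out_bij M hbi a').1 (by
          rw [Function.rightInverse_invFun (edual_out_bij M hbi a').2 (q, !b), h2])
      refine ⟨q₀, ?_, ?_, ?_⟩
      · show (Function.invFun (M.edual.out a) (q, b)) = (q₀, b)
        exact hinv
      · show (Function.invFun (M.edual.out
            (M.edual.step a (Function.invFun (M.edual.out a) (q, b)))) (q, !b)) = (q₀, !b)
        rw [hinv]
        exact hinv'
      · show (M.edual.step (M.edual.step a (Function.invFun (M.edual.out a) (q, b)))
            (Function.invFun (M.edual.out
              (M.edual.step a (Function.invFun (M.edual.out a) (q, b)))) (q, !b)), false)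
            = (a, false)
        rw [hinv]
        show (M.edual.step a' (Function.invFun (M.edual.out a') (q, !b)), false) = (a, false)
        rw [hinv', h3]

end Bireversible

end Aux

/-- For a bireversible Mealy automaton `A`, the Schreier graph (orbit) of every
essentially trivial point `v ∈ (Q ∪ Q⁻¹)^ω` under the group generated by the
enriched dual `∂A⁻` (acting together with the formal inverses of its states) is
finite; equivalently, the stabilizer of `v` has finite index. -/
theorem finite_schreier_graph_of_essentially_trivial {Q A : Type}
    [Fintype Q] [Fintype A] [Nonempty A] [Nonempty Q] [DecidableEq Q]
    (M : Mealy Q A) (hbi : M.IsBireversible)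
    (v : ℕ → Q × Bool) (hv : EssentiallyTrivial v) :
    ((M.edual.withInv).orbitOmega v).Finite := by
  obtain ⟨m, hm⟩ := hv
  set N := M.edual.withInv with hN
  have hp : PairTransparent N := withInv_edual_pair M hbi
  -- every orbit element is determined by a function on a finite type
  have hsub : N.orbitOmega v ⊆ Set.range
      (fun g : ({r : List (Q × Bool) // r.length ≤ m} × (Q × Bool)) → (Q × Bool) =>
        (fun n => g (⟨FreeGroup.reduce (pre v n), hm n⟩, v n) : ℕ → Q × Bool)) := by
    rintro z ⟨l, rfl⟩
    refine ⟨fun p => psi N l p.1.1 p.2, ?_⟩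
    funext n
    show psi N l (FreeGroup.reduce (pre v n)) (v n) = _
    rw [← psi_red N hp l (FreeGroup.reduce.red) (v n)]
    exact (applyListOmega_eq_psi N l v n).symm
  haveI : Finite {r : List (Q × Bool) // r.length ≤ m} :=
    (List.finite_length_le (Q × Bool) m).to_subtype
  exact (Set.finite_range _).subset hsub
end

section
/- Let G be a non-trivial finite group and C̃(G) the bi-0-transition Cayley machine (with transitions 𝐠 →^{(x)|(x)} 𝐠𝐱 for g ∉ {x^{-1}, e}, 𝐠 →^{(x)|(e)} 𝐞 for g = x^{-1} ≠ e, and 𝐞 →^{(x)|(e)} 𝐱 for all x). Then in the group 𝒢(∂C̃(G)) generated by the dual, the generator (g) and the generator (g^{-1}) are mutually inverse: (g)(g^{-1}) = (g^{-1})(g) = identity. In particular 𝒢(∂C̃(G)) is not free on the generating set (G). -/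
/-- The bi-0-transition Cayley machine `C̃(G)` of a finite group `G`: transitions
`g →^{x|x} g·x` for `g ∉ {x⁻¹, e}`, `g →^{x|e} e` for `g = x⁻¹ ≠ e`, and
`e →^{x|e} x` for all `x`. -/
def cayleyBi0 (G : Type*) [Group G] [DecidableEq G] : Mealy G G where
  step g x := if g = 1 then x else if g = x⁻¹ then 1 else g * x
  out g x := if g = 1 then 1 else if g = x⁻¹ then 1 else x

section Aux

variable {G : Type} [Group G] [DecidableEq G]

lemma cb_step (q x : G) :
    (cayleyBi0 G).step q x = if q = 1 then x else if q = x⁻¹ then 1 else q * x := rfl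

lemma cb_out (q x : G) :
    (cayleyBi0 G).out q x = if q = 1 then 1 else if q = x⁻¹ then 1 else x := rfl

lemma cb_dact_cons (a q : G) (w : List G) :
    (cayleyBi0 G).dual.act a (q :: w) =
      (cayleyBi0 G).step q a :: (cayleyBi0 G).dual.act ((cayleyBi0 G).out q a) w := rfl

lemma cb_act_one (w : List G) : (cayleyBi0 G).dual.act 1 w = w := by
  induction w with
  | nil => rfl
  | cons q w ih =>
    rw [cb_dact_cons, cb_step, cb_out]
    split_ifs <;> simp_all

lemma cb_key (g : G) (w : List G) :
    (cayleyBi0 G).dual.act g ((cayleyBi0 G).dual.act g⁻¹ w) = w := by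
  by_cases hg : g = 1
  · simp [hg, cb_act_one]
  induction w with
  | nil => rfl
  | cons q w ih =>
    have hginv : g⁻¹ ≠ 1 := inv_ne_one.mpr hg
    rw [cb_dact_cons, cb_dact_cons, cb_step, cb_step, cb_out, cb_out]
    rcases eq_or_ne q 1 with h1 | h1
    · subst h1
      simp [hg, hginv, cb_act_one]
    rcases eq_or_ne q g with h2 | h2
    · subst h2
      simp [hg, hginv, cb_act_one]
    · have hq1 : q ≠ (g⁻¹)⁻¹ := by simpa using h2
      have hne1 : q * g⁻¹ ≠ 1 := fun h => h2 (mul_inv_eq_one.mp h)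
      have hne2 : q * g⁻¹ ≠ g⁻¹ := by
        intro h; exact h1 (by have := mul_right_cancel (b := g⁻¹) (h.trans (one_mul _).symm); simpa using this)
      simp only [if_neg h1, if_neg hq1, if_neg hne1, if_neg hne2, if_neg hg,
        if_neg hginv, inv_mul_cancel_right]
      exact congrArg _ ih

lemma cb_key' (g : G) (w : List G) :
    (cayleyBi0 G).dual.act g⁻¹ ((cayleyBi0 G).dual.act g w) = w := by
  have := cb_key g⁻¹ w
  simpa using this

end Aux

/-- For a non-trivial finite group `G`, in the group `𝒢(∂C̃(G))` generated by the
dual of the bi-0-transition Cayley machine, the generators `(g)` and `(g⁻¹)` are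
mutually inverse; in particular `𝒢(∂C̃(G))` is not free on the generating set
`(G)`. -/
theorem dual_cayleyBi0_generators_mutually_inverse
    {G : Type} [Group G] [Fintype G] [DecidableEq G] [Nontrivial G] [Nonempty G] :
    (∀ g : G, ∀ w : List G,
      (cayleyBi0 G).dual.act g ((cayleyBi0 G).dual.act g⁻¹ w) = w ∧
      (cayleyBi0 G).dual.act g⁻¹ ((cayleyBi0 G).dual.act g w) = w) ∧
    (∃ w : List (G × Bool), FreeGroup.mk w ≠ 1 ∧
      ∀ v : List G, (cayleyBi0 G).dual.evalW w v = v) := by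
  refine ⟨fun g w => ⟨cb_key g w, cb_key' g w⟩, ?_⟩
  obtain ⟨g, hg⟩ := exists_ne (1 : G)
  refine ⟨[(g, true), (g⁻¹, true)], ?_, fun v => ?_⟩
  · intro h
    have h2 : FreeGroup.mk [(g, true), (g⁻¹, true)] =
        FreeGroup.of g * FreeGroup.of g⁻¹ := by
      rw [FreeGroup.of, FreeGroup.of, FreeGroup.mul_mk]; rfl
    have := congrArg (FreeGroup.lift fun _ : G => Multiplicative.ofAdd (1 : ℤ)) h
    rw [h2] at this
    simp [← ofAdd_add] at this
  · show (cayleyBi0 G).dual.act g ((cayleyBi0 G).dual.act g⁻¹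
      ((cayleyBi0 G).dual.evalW [] v)) = v
    exact cb_key g v
end

section
/- Let A = (Q, A, ·, ∘) be an invertible Mealy automaton with a sink state e (satisfying e·v = e and e∘v = v for all v) such that the sink is accessible from every state. Then for every element g of the group 𝒢(A) (represented by a word over Q ∪ Q^{-1}), there exists a g-regular point: an infinite word w ∈ A^ω with a finite prefix w[n] such that the state transition of the representing word on w[n] lands entirely in the sink (g · w[n] acts trivially). -/
namespace MealyAux

open Mealy

variable {Q A : Type*}

theorem run_cons (M : Mealy Q A) (q : Q) (a : A) (w : List A) :
    M.run q (a :: w) = M.run (M.step q a) w := rfl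

theorem run_append (M : Mealy Q A) (q : Q) (x y : List A) :
    M.run q (x ++ y) = M.run (M.run q x) y := List.foldl_append

theorem act_append (M : Mealy Q A) (q : Q) (x y : List A) :
    M.act q (x ++ y) = M.act q x ++ M.act (M.run q x) y := by
  induction x generalizing q with
  | nil => rfl
  | cons a x ih => simp [Mealy.act, ih, run_cons]

section Sink

variable (M : Mealy Q A) (P : Q → Prop)
  (hstep : ∀ q a, P q → P (M.step q a))

include hstep

theorem run_sink (q : Q) (u : List A) (h : P q) : P (M.run q u) := by
  induction u generalizing q with
  | nil => exact h
  | cons a u ih => exact ih _ (hstep _ _ h)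

variable (hout : ∀ q a, P q → M.out q a = a)

include hout

theorem act_sink (q : Q) (u : List A) (h : P q) : M.act q u = u := by
  induction u generalizing q with
  | nil => rfl
  | cons a u ih => simp [Mealy.act, hout _ _ h, ih _ (hstep _ _ h)]

theorem wact_sink (l : List Q) (u : List A) (h : ∀ p ∈ l, P p) :
    M.wact l u = u := by
  induction l with
  | nil => rfl
  | cons q l ih =>
    rw [Mealy.wact, ih (fun p hp => h p (List.mem_cons_of_mem _ hp)),
      act_sink M P hstep hout q u (h q List.mem_cons_self)]

omit hstep hout in
theorem wact_append (w : List Q) (u u' : List A) :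
    M.wact w (u ++ u') = M.wact w u ++ M.wact (M.wstep w u) u' := by
  induction w with
  | nil => rfl
  | cons q w ih => simp [Mealy.wact, Mealy.wstep, ih, act_append]

theorem wstep_append_sink (w : List Q) (u u' : List A)
    (h : ∀ p ∈ M.wstep w u, P p) : ∀ p ∈ M.wstep w (u ++ u'), P p := by
  induction w with
  | nil => simp [Mealy.wstep]
  | cons q w ih =>
    intro p hp
    rw [Mealy.wstep, wact_append, List.mem_cons] at hp
    rcases hp with hp | hp
    · subst hp
      rw [run_append]
      exact run_sink M P hstep _ _ (h _ List.mem_cons_self)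
    · exact ih (fun p hp => h p (List.mem_cons_of_mem _ hp)) p hp

end Sink

theorem runTrue (M : Mealy Q A) [Nonempty A] (q : Q) (v : List A) :
    M.withInv.run (q, true) v = (M.run q v, true) := by
  induction v generalizing q with
  | nil => rfl
  | cons a v ih => exact ih (M.step q a)

theorem runFalse (M : Mealy Q A) [Nonempty A] (hinv : M.IsInvertible)
    (q : Q) (v : List A) :
    M.withInv.run (q, false) (M.act q v) = (M.run q v, false) := by
  induction v generalizing q with
  | nil => rfl
  | cons a v ih =>
    have hst : M.withInv.step (q, false) (M.out q a) = (M.step q a, false) := by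
      show (M.step q (Function.invFun (M.out q) (M.out q a)), false) = _
      rw [Function.leftInverse_invFun (hinv q).injective a]
    rw [Mealy.act, run_cons, hst]
    exact ih (M.step q a)

theorem withInv_acc (M : Mealy Q A) [Nonempty A] (hinv : M.IsInvertible)
    (e : Q) (hacc : ∀ q : Q, ∃ u : List A, M.run q u = e) (s : Q × Bool) :
    ∃ u' : List A, (M.withInv.run s u').1 = e := by
  obtain ⟨q, b⟩ := s
  obtain ⟨v, hv⟩ := hacc q
  cases b
  · exact ⟨M.act q v, by rw [runFalse M hinv, hv]⟩
  · exact ⟨v, by rw [runTrue, hv]⟩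

theorem pre_getD {α : Type*} [Inhabited α] (l : List α) :
    pre (fun k => l.getD k default) l.length = l := by
  apply List.ext_getElem
  · simp [pre]
  · intro i h1 h2
    simp [pre, List.getD_eq_getElem]

end MealyAux

/-- If an invertible Mealy automaton has a sink state `e` (with `e·a = e` and
`e∘a = a`) accessible from every state, then every element `g` of `𝒢(A)`,
represented by a word over `Q ∪ Q⁻¹`, admits a `g`-regular point: an infinite word
`w ∈ A^ω` with a finite prefix on which the state-word transition of the
representing word lands entirely in the sink. -/
theorem exists_regular_point_of_accessible_sink {Q A : Type}
    [Fintype Q] [Fintype A] [Nonempty A]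
    (M : Mealy Q A) (hinv : M.IsInvertible)
    (e : Q) (hsink : ∀ a : A, M.step e a = e ∧ M.out e a = a)
    (hacc : ∀ q : Q, ∃ u : List A, M.run q u = e)
    (g : List (Q × Bool)) :
    ∃ w : ℕ → A, ∃ n : ℕ,
      ∀ p ∈ M.withInv.wstep g (pre w n), p.1 = e := by
  haveI : Inhabited A := ⟨Classical.arbitrary A⟩
  -- sink properties of `withInv` for the predicate `p.1 = e`
  set N := M.withInv with hN
  have hstep : ∀ (s : Q × Bool) (a : A), s.1 = e → (N.step s a).1 = e := by
    rintro ⟨q, b⟩ a h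
    simp only at h
    cases b
    · show M.step q (Function.invFun (M.out q) a) = e
      rw [h]; exact (hsink _).1
    · show M.step q a = e
      rw [h]; exact (hsink _).1
  have houtE : ∀ a : A, M.out e a = a := fun a => (hsink a).2
  have hout : ∀ (s : Q × Bool) (a : A), s.1 = e → N.out s a = a := by
    rintro ⟨q, b⟩ a h
    simp only at h
    cases b
    · show Function.invFun (M.out q) a = a
      rw [h]
      have h1 := Function.invFun_eq ((hinv e).surjective a)
      rwa [houtE] at h1
    · show M.out q a = a
      rw [h]; exact houtE a
  induction g with
  | nil =>
    exact ⟨fun _ => default, 0, by simp [Mealy.wstep]⟩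
  | cons qb g ih =>
    obtain ⟨w, n, hw⟩ := ih
    set u := pre w n with hu
    obtain ⟨u', hu'⟩ := MealyAux.withInv_acc M hinv e hacc (N.run qb (N.wact g u))
    refine ⟨fun k => (u ++ u').getD k default, (u ++ u').length, ?_⟩
    rw [MealyAux.pre_getD]
    intro p hp
    rw [Mealy.wstep, MealyAux.wact_append, List.mem_cons] at hp
    rcases hp with hp | hp
    · subst hp
      rw [MealyAux.wact_sink N _ hstep hout _ _ hw, MealyAux.run_append]
      exact hu'
    · exact MealyAux.wstep_append_sink N _ hstep hout g u u' hw p hp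
end
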